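/- Suppose f_{α,γ}(λ,∂) ∈ ℂ[λ,∂] (α, γ ∈ Δ) is a family satisfying the intermediate-series equation. If there exist α₀, β₀ ∈ Δ with f_{α₀,β₀} = 0, then f_{α,β} = 0 for all α, β ∈ Δ. -/

import Mathlib

/-- Evaluation of a two-variable polynomial `P(λ,∂) ∈ ℂ[λ,∂]` at `λ = l`, `∂ = d`. -/
noncomputable def ev2 (P : MvPolynomial (Fin 2) ℂ) (l d : ℂ) : ℂ :=
  MvPolynomial.eval ![l, d] P

/-- `B(α,β) = (1/b)(φ(α)β − φ(β)α + b(φ(α) − φ(β)))`. -/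
noncomputable def Bc (b : ℂ) {Δ : AddSubgroup ℂ} (φ : Δ →+ ℂ) (α β : Δ) : ℂ :=
  (1 / b) * (φ α * (β : ℂ) - φ β * (α : ℂ) + b * (φ α - φ β))

/-- The intermediate-series equation for a family `f_{α,γ}(λ,∂) ∈ ℂ[λ,∂]`:
`((β+b)λ − (α+b)μ + B(α,β)) f_{α+β,γ}(λ+μ,∂)
  = f_{β,γ}(μ,λ+∂) f_{α,β+γ}(λ,∂) − f_{α,γ}(λ,μ+∂) f_{β,α+γ}(μ,∂)`
for all `α, β, γ ∈ Δ` (an identity in `ℂ[λ,μ,∂]`, stated via evaluation at all complex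
points `l, m, d`).  Equivalently, `V = ⊕_{γ∈Δ} ℂ[∂]M_γ` with
`x_α λ M_γ = f_{α,γ}(λ,∂) M_{α+γ}` is a free intermediate series module over
`CL(b,φ)`. -/
def ISE (Δ : AddSubgroup ℂ) (b : ℂ) (φ : Δ →+ ℂ)
    (f : Δ → Δ → MvPolynomial (Fin 2) ℂ) : Prop :=
  ∀ α β γ : Δ, ∀ l m d : ℂ,
    (((β : ℂ) + b) * l - ((α : ℂ) + b) * m + Bc b φ α β)
        * ev2 (f (α + β) γ) (l + m) d
      = ev2 (f β γ) m (l + d) * ev2 (f α (β + γ)) l d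
        - ev2 (f α γ) l (m + d) * ev2 (f β (α + γ)) m d

/- ### Auxiliary lemmas -/

lemma ev2_eq_zero {P : MvPolynomial (Fin 2) ℂ} (h : ∀ l d : ℂ, ev2 P l d = 0) : P = 0 := by
  apply MvPolynomial.funext
  intro x
  have hx : ![x 0, x 1] = x := by
    funext i; fin_cases i <;> rfl
  have := h (x 0) (x 1)
  rw [ev2, hx] at this
  simpa using this

lemma ev2_zero (l d : ℂ) : ev2 0 l d = 0 := by simp [ev2]

lemma ev2_mul (P Q : MvPolynomial (Fin 2) ℂ) (l d : ℂ) :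
    ev2 (P * Q) l d = ev2 P l d * ev2 Q l d := by simp [ev2]

open MvPolynomial in
lemma prod_dich (g h : MvPolynomial (Fin 2) ℂ) (c₁ c₀ : ℂ) (hc : c₁ ≠ 0)
    (H : ∀ l d : ℂ, ev2 g (c₁ * l + c₀) (l + d) * ev2 h l d = 0) :
    g = 0 ∨ h = 0 := by
  set g' : MvPolynomial (Fin 2) ℂ :=
    MvPolynomial.bind₁ ![C c₁ * X 0 + C c₀, X 0 + X 1] g with hg'
  have key : ∀ l d : ℂ, ev2 g' l d = ev2 g (c₁ * l + c₀) (l + d) := by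
    intro l d
    have h1 : MvPolynomial.eval₂Hom (RingHom.id ℂ) ![l, d]
          (MvPolynomial.bind₁ ![C c₁ * X 0 + C c₀, X 0 + X 1] g)
        = MvPolynomial.eval₂Hom (RingHom.id ℂ)
          (fun i => MvPolynomial.eval₂Hom (RingHom.id ℂ) ![l, d]
            ((![C c₁ * X 0 + C c₀, X 0 + X 1] : Fin 2 → MvPolynomial (Fin 2) ℂ) i)) g :=
      MvPolynomial.eval₂Hom_bind₁ _ _ _ _
    have h2 : (fun i => MvPolynomial.eval₂Hom (RingHom.id ℂ) ![l, d]
          ((![C c₁ * X 0 + C c₀, X 0 + X 1] : Fin 2 → MvPolynomial (Fin 2) ℂ) i))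
        = ![c₁ * l + c₀, l + d] := by
      funext i
      fin_cases i <;> simp
    rw [h2] at h1
    exact h1
  have hprod : g' * h = 0 := by
    apply ev2_eq_zero
    intro l d
    rw [ev2_mul, key]
    exact H l d
  rcases mul_eq_zero.mp hprod with h1 | h2
  · left
    apply ev2_eq_zero
    intro p e
    have h2 := key ((p - c₀) / c₁) (e - (p - c₀) / c₁)
    rw [h1, ev2_zero] at h2
    have e1 : c₁ * ((p - c₀) / c₁) + c₀ = p := by field_simp; ring
    have e2 : (p - c₀) / c₁ + (e - (p - c₀) / c₁) = e := by ring
    rw [e1, e2] at h2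
    exact h2.symm
  · right; exact h2

lemma lin_cancel (F : MvPolynomial (Fin 2) ℂ) (p q r : ℂ) (hpq : p + q ≠ 0)
    (H : ∀ l m d : ℂ, (p * l - q * m + r) * ev2 F (l + m) d = 0) : F = 0 := by
  apply ev2_eq_zero
  intro x d
  set l : ℂ := (1 + q * x - r) / (p + q) with hl
  have hcoef : p * l - q * (x - l) + r = 1 := by
    rw [hl]; field_simp; ring
  have := H l (x - l) d
  rw [hcoef, one_mul, show l + (x - l) = x by ring] at this
  exact this

lemma nz1 {Δ : AddSubgroup ℂ} {b : ℂ} (hb : 2 * b ∉ Δ) (α : Δ) : (α : ℂ) + b ≠ 0 := by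
  intro h
  apply hb
  have h2 : 2 * b = ((-(α + α) : Δ) : ℂ) := by push_cast; linear_combination 2 * h
  rw [h2]; exact SetLike.coe_mem _

lemma nz2 {Δ : AddSubgroup ℂ} {b : ℂ} (hb : 2 * b ∉ Δ) (α β : Δ) :
    ((β : ℂ) + b) + ((α : ℂ) + b) ≠ 0 := by
  intro h
  apply hb
  have h2 : 2 * b = ((-(α + β) : Δ) : ℂ) := by push_cast; linear_combination h
  rw [h2]; exact SetLike.coe_mem _

/-- Restricting the intermediate-series equation to the line where the left-hand
coefficient vanishes: if the second product on the right vanishes identically,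
then one of the two factors of the first product vanishes. -/
lemma line_dich {Δ : AddSubgroup ℂ} {b : ℂ} {φ : Δ →+ ℂ}
    {f : Δ → Δ → MvPolynomial (Fin 2) ℂ} (hf : ISE Δ b φ f) (hb : 2 * b ∉ Δ)
    (a β c : Δ)
    (hzero : ∀ l m d : ℂ, ev2 (f a c) l (m + d) * ev2 (f β (a + c)) m d = 0) :
    f β c = 0 ∨ f a (β + c) = 0 := by
  have ha : (a : ℂ) + b ≠ 0 := nz1 hb a
  have hβ : (β : ℂ) + b ≠ 0 := nz1 hb β
  apply prod_dich (f β c) (f a (β + c)) (((β : ℂ) + b) / ((a : ℂ) + b))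
    (Bc b φ a β / ((a : ℂ) + b)) (div_ne_zero hβ ha)
  intro l d
  set m : ℂ := (((β : ℂ) + b) / ((a : ℂ) + b)) * l + Bc b φ a β / ((a : ℂ) + b) with hm
  have hcoeff : ((β : ℂ) + b) * l - ((a : ℂ) + b) * m + Bc b φ a β = 0 := by
    rw [hm]; field_simp; ring
  have := hf a β c l m d
  rw [hcoeff, zero_mul, hzero l m d, sub_zero] at this
  exact this.symm

/-- If `f α γ = 0` then a whole column vanishes: `f x γ = 0` for all `x`. -/
lemma colz {Δ : AddSubgroup ℂ} {b : ℂ} {φ : Δ →+ ℂ}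
    {f : Δ → Δ → MvPolynomial (Fin 2) ℂ} (hf : ISE Δ b φ f) (hb : 2 * b ∉ Δ)
    (a c : Δ) (hac : f a c = 0) : ∀ x : Δ, f x c = 0 := by
  have step : ∀ β : Δ, f (a + β) c = 0 := by
    intro β
    have hd : f β c = 0 ∨ f a (β + c) = 0 := by
      apply line_dich hf hb a β c
      intro l m d
      rw [hac, ev2_zero, zero_mul]
    apply lin_cancel (f (a + β) c) ((β : ℂ) + b) ((a : ℂ) + b) (Bc b φ a β) (nz2 hb a β)
    intro l m d
    have := hf a β c l m d
    rw [hac, ev2_zero, zero_mul, sub_zero] at this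
    rcases hd with h1 | h1
    · rw [h1, ev2_zero, zero_mul] at this; exact this
    · rw [h1, ev2_zero, mul_zero] at this; exact this
  intro x
  have hx : a + (x - a) = x := by abel
  have := step (x - a)
  rwa [hx] at this

/-- If a family satisfying the intermediate-series equation has some
vanishing member `f_{α₀,β₀} = 0`, then all members vanish. -/
theorem stmt10 (Δ : AddSubgroup ℂ) (hΔinf : (Δ : Set ℂ).Infinite)
    (b : ℂ) (hb : 2 * b ∉ Δ) (φ : Δ →+ ℂ)
    (f : Δ → Δ → MvPolynomial (Fin 2) ℂ) (hf : ISE Δ b φ f)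
    (α₀ β₀ : Δ) (h0 : f α₀ β₀ = 0) :
    ∀ α β : Δ, f α β = 0 := by
  have col0 : ∀ x : Δ, f x β₀ = 0 := colz hf hb α₀ β₀ h0
  intro x y
  have hdi : f 0 y = 0 ∨ f (β₀ - y) (0 + y) = 0 := by
    apply line_dich hf hb (β₀ - y) 0 y
    intro l m d
    have h1 : (β₀ - y) + y = β₀ := by abel
    rw [h1, col0 0, ev2_zero, mul_zero]
  rcases hdi with h | h
  · exact colz hf hb 0 y h x
  · rw [zero_add] at h
    exact colz hf hb (β₀ - y) y h x
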